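/- For all real γ with 0 < γ and all integers k ≥ 3, the inequality k^(−γ) > k·(2^(−γ) − 1) + 2 − 2^(−γ) holds. -/
import Mathlib


theorem stmt_3 (γ : ℝ) (hγ : 0 < γ) (k : ℕ) (hk : 3 ≤ k) :
    (k : ℝ) ^ (-γ) > (k : ℝ) * ((2 : ℝ) ^ (-γ) - 1) + 2 - (2 : ℝ) ^ (-γ) := by
  set t : ℝ := (2 : ℝ) ^ (-γ) with ht
  have ht0 : 0 < t := Real.rpow_pos_of_pos (by norm_num) _
  -- k < 2^(k-1)
  have hklt : (k : ℝ) < (2 : ℝ) ^ (k - 1) := by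
    have : k < 2 ^ (k - 1) := by
      clear ht ht0
      induction k with
      | zero => omega
      | succ n ih =>
        rcases Nat.lt_or_ge n 3 with h | h
        · interval_cases n <;> first | omega | norm_num
        · have := ih (by omega)
          have : n + 1 < 2 ^ (n - 1) + 2 ^ (n - 1) := by
            have h1 : 1 ≤ 2 ^ (n - 1) := Nat.one_le_two_pow
            omega
          have hn : n + 1 - 1 = n - 1 + 1 := by omega
          rw [hn, pow_succ]
          omega
    exact_mod_cast this
  have hstep : ((2 : ℝ) ^ (k - 1 : ℕ)) ^ (-γ) < (k : ℝ) ^ (-γ) := by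
    refine Real.rpow_lt_rpow_of_neg ?_ hklt (neg_neg_of_pos hγ)
    positivity
  have heq : ((2 : ℝ) ^ (k - 1 : ℕ)) ^ (-γ) = t ^ (k - 1 : ℕ) := by
    rw [← Real.rpow_natCast (2:ℝ) (k-1), ← Real.rpow_mul (by norm_num),
      mul_comm, Real.rpow_mul (by norm_num), Real.rpow_natCast]
  have hbern : 1 + (k - 1 : ℕ) * (t - 1) ≤ t ^ (k - 1 : ℕ) :=
    by simpa using one_add_mul_le_pow (a := t - 1) (by nlinarith) (k - 1)
  have hlt : 1 + (k - 1 : ℕ) * (t - 1) < (k : ℝ) ^ (-γ) := by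
    calc (1 : ℝ) + (k - 1 : ℕ) * (t - 1) ≤ t ^ (k - 1 : ℕ) := hbern
      _ = ((2 : ℝ) ^ (k - 1 : ℕ)) ^ (-γ) := heq.symm
      _ < (k : ℝ) ^ (-γ) := hstep
  have hcast : ((k - 1 : ℕ) : ℝ) = (k : ℝ) - 1 := by
    have : 1 ≤ k := by omega
    push_cast [this]; ring
  rw [hcast] at hlt
  nlinarith [hlt]
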